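/- (Proposition 1, mixedness) Let N ≥ 1, n ≥ 2, let λ : Fin n → ℝ satisfy λ_i > 0 and ∑_i λ_i = 1, and let p : Fin n → Fin N → EuclideanSpace ℝ (Fin 3) be unit vectors. Let ρ be the N-qubit matrix ρ = ∑_i λ_i M_i, where M_i is the N-fold Kronecker product with entries M_i f g = ∏_α ρ_{p i α} (f α) (g α). If there exist indices i ≠ j and α with p i α ≠ p j α, then trace(ρ * ρ) < 1, i.e. ρ is a mixed state. -/

import Mathlib

open Matrix

/-- The Bloch matrix `ρ_p = (1/2)(I + p₁σx + p₂σy + p₃σz)` of a vector `p ∈ ℝ³`. -/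
noncomputable def blochMat (p : EuclideanSpace ℝ (Fin 3)) : Matrix (Fin 2) (Fin 2) ℂ :=
  (1 / 2 : ℂ) • ((1 : Matrix (Fin 2) (Fin 2) ℂ)
    + (p 0 : ℂ) • !![0, 1; 1, 0]
    + (p 1 : ℂ) • !![0, -Complex.I; Complex.I, 0]
    + (p 2 : ℂ) • !![1, 0; 0, -1])

/-- The N-fold Kronecker product of the Bloch matrices of `p α`, `α : Fin N`, as an
N-qubit matrix indexed by `Fin N → Fin 2`. -/
noncomputable def prodState {N : ℕ} (p : Fin N → EuclideanSpace ℝ (Fin 3)) :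
    Matrix (Fin N → Fin 2) (Fin N → Fin 2) ℂ :=
  Matrix.of fun f g => ∏ α, blochMat (p α) (f α) (g α)

lemma trace_bloch_mul (p q : EuclideanSpace ℝ (Fin 3)) :
    (blochMat p * blochMat q).trace = (((1 + inner ℝ p q) / 2 : ℝ) : ℂ) := by
  have h : (inner ℝ p q : ℝ) = p 0 * q 0 + p 1 * q 1 + p 2 * q 2 := by
    simp [PiLp.inner_apply, Fin.sum_univ_three, mul_comm]
  rw [h]
  simp [blochMat, Matrix.trace_fin_two, Matrix.mul_apply, Fin.sum_univ_two, Matrix.one_apply]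
  ring_nf
  simp [Complex.I_sq]
  ring

lemma trace_prodState_mul {N : ℕ} (p q : Fin N → EuclideanSpace ℝ (Fin 3)) :
    (prodState p * prodState q).trace
      = ((∏ α, (1 + inner ℝ (p α) (q α)) / 2 : ℝ) : ℂ) := by
  have key : (prodState p * prodState q).trace
      = ∏ α, (blochMat (p α) * blochMat (q α)).trace := by
    calc (prodState p * prodState q).trace
        = ∑ f : Fin N → Fin 2, ∑ g : Fin N → Fin 2,
            ∏ α, (blochMat (p α) (f α) (g α) * blochMat (q α) (g α) (f α)) := by
          simp [Matrix.trace, Matrix.diag, Matrix.mul_apply, prodState,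
            Finset.prod_mul_distrib]
      _ = ∑ f : Fin N → Fin 2,
            ∏ α, ∑ y : Fin 2, blochMat (p α) (f α) y * blochMat (q α) y (f α) := by
          refine Finset.sum_congr rfl fun f _ => ?_
          rw [Finset.prod_univ_sum, Fintype.piFinset_univ]
      _ = ∏ α, ∑ x : Fin 2, ∑ y : Fin 2,
            blochMat (p α) x y * blochMat (q α) y x := by
          rw [Finset.prod_univ_sum, Fintype.piFinset_univ]
      _ = ∏ α, (blochMat (p α) * blochMat (q α)).trace := by
          simp [Matrix.trace, Matrix.diag, Matrix.mul_apply]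
  rw [key, Complex.ofReal_prod]
  exact Finset.prod_congr rfl fun α _ => trace_bloch_mul _ _

/-- (Proposition 1, mixedness.) A fully separable N-qubit state
`ρ = ∑_i λ_i ρ_{p i 1} ⊗ ⋯ ⊗ ρ_{p i N}` with positive weights, unit Bloch vectors, and at
least two genuinely different product terms satisfies `trace(ρ²) < 1`, i.e. it is mixed. -/
theorem separable_state_is_mixed (N n : ℕ) (hN : 1 ≤ N) (hn : 2 ≤ n)
    (lam : Fin n → ℝ) (hpos : ∀ i, 0 < lam i) (hsum : ∑ i, lam i = 1)
    (p : Fin n → Fin N → EuclideanSpace ℝ (Fin 3))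
    (hunit : ∀ i α, ‖p i α‖ = 1)
    (i j : Fin n) (α : Fin N) (hij : i ≠ j) (hp : p i α ≠ p j α) :
    (Matrix.trace
        ((∑ i, (lam i : ℂ) • prodState (p i)) * (∑ i, (lam i : ℂ) • prodState (p i)))).re
      < 1 := by
  -- real factors
  set t : Fin n → Fin n → Fin N → ℝ := fun a b β => (1 + inner ℝ (p a β) (p b β)) / 2 with ht
  have ht01 : ∀ a b β, 0 ≤ t a b β ∧ t a b β ≤ 1 := by
    intro a b β
    have := abs_real_inner_le_norm (p a β) (p b β)
    rw [hunit, hunit, one_mul] at this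
    have h1 := abs_le.mp this
    simp only [ht]
    constructor <;> linarith [h1.1, h1.2]
  set T : Fin n → Fin n → ℝ := fun a b => ∏ β, t a b β with hT
  have hT01 : ∀ a b, 0 ≤ T a b ∧ T a b ≤ 1 := fun a b =>
    ⟨Finset.prod_nonneg fun β _ => (ht01 a b β).1,
     Finset.prod_le_one (fun β _ => (ht01 a b β).1) fun β _ => (ht01 a b β).2⟩
  have hTij : T i j < 1 := by
    have hlt : t i j α < 1 := by
      have hne : (inner ℝ (p i α) (p j α) : ℝ) ≠ 1 := fun h =>
        hp ((inner_eq_one_iff_of_norm_eq_one (hunit i α) (hunit j α)).mp h)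
      have hle : (inner ℝ (p i α) (p j α) : ℝ) ≤ 1 := by
        have := abs_real_inner_le_norm (p i α) (p j α)
        rw [hunit, hunit, one_mul] at this
        exact (abs_le.mp this).2
      have := lt_of_le_of_ne hle hne
      simp only [ht]; linarith
    calc T i j = t i j α * ∏ β ∈ Finset.univ.erase α, t i j β := by
          rw [Finset.mul_prod_erase _ _ (Finset.mem_univ α)]
      _ ≤ t i j α * 1 := by
          refine mul_le_mul_of_nonneg_left ?_ (ht01 i j α).1
          exact Finset.prod_le_one (fun β _ => (ht01 i j β).1) fun β _ => (ht01 i j β).2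
      _ < 1 := by rw [mul_one]; exact hlt
  -- trace computation
  have htr : (Matrix.trace
        ((∑ i, (lam i : ℂ) • prodState (p i)) * (∑ i, (lam i : ℂ) • prodState (p i))))
      = ((∑ a, ∑ b, lam a * lam b * T a b : ℝ) : ℂ) := by
    rw [Finset.sum_mul_sum, Matrix.trace_sum, Complex.ofReal_sum]
    refine Finset.sum_congr rfl fun a _ => ?_
    rw [Matrix.trace_sum, Complex.ofReal_sum]
    refine Finset.sum_congr rfl fun b _ => ?_
    rw [Matrix.smul_mul, Matrix.mul_smul, Matrix.trace_smul, Matrix.trace_smul,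
      trace_prodState_mul, smul_eq_mul, smul_eq_mul, ← Complex.ofReal_mul,
      ← Complex.ofReal_mul]
    congr 1
    simp only [hT, ht]
    ring
  rw [htr, Complex.ofReal_re]
  have h1 : (1 : ℝ) = ∑ a, ∑ b, lam a * lam b := by
    rw [← Finset.sum_mul_sum, hsum, one_mul]
  rw [h1, ← Finset.sum_product', ← Finset.sum_product']
  refine Finset.sum_lt_sum (fun x _ => ?_) ⟨(i, j), Finset.mem_univ _, ?_⟩
  · have hl : 0 ≤ lam x.1 * lam x.2 := le_of_lt (mul_pos (hpos _) (hpos _))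
    calc lam x.1 * lam x.2 * T x.1 x.2 ≤ lam x.1 * lam x.2 * 1 :=
          mul_le_mul_of_nonneg_left (hT01 _ _).2 hl
      _ = lam x.1 * lam x.2 := mul_one _
  · have hl : 0 < lam i * lam j := mul_pos (hpos _) (hpos _)
    calc lam i * lam j * T i j < lam i * lam j * 1 :=
          mul_lt_mul_of_pos_left hTij hl
      _ = lam i * lam j := mul_one _
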